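/- Let Φ = (G, φ) be a connected T-gain graph. Then the largest eigenvalue of the Hermitian adjacency matrix A(Φ) equals the largest eigenvalue of the adjacency matrix A(G) of the underlying graph if and only if Φ is balanced. -/

import Mathlib

open Matrix
open scoped Classical

noncomputable section

namespace GG

variable {V : Type*}

/-- The gain of a walk: product of the gains of its oriented edges. -/
def walkGain {G : SimpleGraph V} (φ : V → V → ℂ) {u v : V} (p : G.Walk u v) : ℂ :=
  (p.darts.map (fun d => φ d.toProd.1 d.toProd.2)).prod

/-- `φ` is a `𝕋`-gain function on `G`: unit modulus on edges, inverse under reversal. -/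
def IsGain (G : SimpleGraph V) (φ : V → V → ℂ) : Prop :=
  (∀ i j, G.Adj i j → ‖φ i j‖ = 1) ∧ (∀ i j, G.Adj i j → φ j i = (φ i j)⁻¹)

/-- Adjacency matrix of a gain graph. -/
def gainAdj [Fintype V] [DecidableEq V] (G : SimpleGraph V) (φ : V → V → ℂ) :
    Matrix V V ℂ := fun i j => if G.Adj i j then φ i j else 0

/-- A gain graph is balanced if every cycle has gain 1. -/
def GBalanced (G : SimpleGraph V) (φ : V → V → ℂ) : Prop :=
  ∀ (u : V) (c : G.Walk u u), c.IsCycle → walkGain φ c = 1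

/-- All shortest paths between any pair of vertices have the same gain. -/
def DistCompatible (G : SimpleGraph V) (φ : V → V → ℂ) : Prop :=
  ∀ (s t : V) (p q : G.Walk s t), p.length = G.dist s t → q.length = G.dist s t →
    walkGain φ p = walkGain φ q

/-- The set of gains of shortest `s`-`t` paths. -/
def shortestGains (G : SimpleGraph V) (φ : V → V → ℂ) (s t : V) : Set ℂ :=
  {z | ∃ p : G.Walk s t, p.length = G.dist s t ∧ walkGain φ p = z}

/-- The element of `S` maximizing the real part, ties broken by maximal imaginary part
(correct for finite nonempty sets of gains). -/
def lexMaxGain (S : Set ℂ) : ℂ :=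
  ⟨sSup (Complex.re '' S), sSup (Complex.im '' {z ∈ S | z.re = sSup (Complex.re '' S)})⟩

/-- The element of `S` minimizing the real part, ties broken by minimal imaginary part. -/
def lexMinGain (S : Set ℂ) : ℂ :=
  ⟨sInf (Complex.re '' S), sInf (Complex.im '' {z ∈ S | z.re = sInf (Complex.re '' S)})⟩

/-- The maximum gain distance matrix `D^max_<(Φ)` with respect to a strict order `lt`. -/
def Dmax [Fintype V] [DecidableEq V] (G : SimpleGraph V) (φ : V → V → ℂ)
    (lt : V → V → Prop) : Matrix V V ℂ := fun s t =>
  if lt s t then lexMaxGain (shortestGains G φ s t) * (G.dist s t : ℂ)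
  else if lt t s then (starRingEnd ℂ) (lexMaxGain (shortestGains G φ t s)) * (G.dist s t : ℂ)
  else 0

/-- The minimum gain distance matrix `D^min_<(Φ)` with respect to a strict order `lt`. -/
def Dmin [Fintype V] [DecidableEq V] (G : SimpleGraph V) (φ : V → V → ℂ)
    (lt : V → V → Prop) : Matrix V V ℂ := fun s t =>
  if lt s t then lexMinGain (shortestGains G φ s t) * (G.dist s t : ℂ)
  else if lt t s then (starRingEnd ℂ) (lexMinGain (shortestGains G φ t s)) * (G.dist s t : ℂ)
  else 0

/-- Vertex order independence: the gain distance matrices agree for the standard order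
and its reverse. -/
def OrderIndependent [Fintype V] [DecidableEq V] [LinearOrder V] (G : SimpleGraph V)
    (φ : V → V → ℂ) : Prop :=
  Dmax G φ (· < ·) = Dmax G φ (fun a b => b < a) ∧
  Dmin G φ (· < ·) = Dmin G φ (fun a b => b < a)

/-- The largest (real) eigenvalue of a matrix. -/
def maxEig [Fintype V] [DecidableEq V] (A : Matrix V V ℂ) : ℝ :=
  sSup {r : ℝ | (r : ℂ) ∈ spectrum ℂ A}

/-- The spectral radius of a matrix. -/
def specRad [Fintype V] [DecidableEq V] (A : Matrix V V ℂ) : ℝ :=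
  sSup {r : ℝ | ∃ z ∈ spectrum ℂ A, ‖z‖ = r}

/-- The distance matrix of the underlying graph, as a complex matrix. -/
def distMatrix [Fintype V] [DecidableEq V] (G : SimpleGraph V) : Matrix V V ℂ :=
  fun i j => (G.dist i j : ℂ)

/-- Weighted gain adjacency matrix `A(Φ_w)`. -/
def wGainAdj [Fintype V] [DecidableEq V] (G : SimpleGraph V) (φ : V → V → ℂ)
    (w : V → V → ℝ) : Matrix V V ℂ := fun i j => if G.Adj i j then φ i j * (w i j : ℂ) else 0

/-- Weighted adjacency matrix `A(G_w)` of the underlying weighted graph. -/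
def wAdj [Fintype V] [DecidableEq V] (G : SimpleGraph V) (w : V → V → ℝ) :
    Matrix V V ℂ := fun i j => if G.Adj i j then (w i j : ℂ) else 0


section WalkLemmas
open SimpleGraph Walk

variable {G : SimpleGraph V} {φ : V → V → ℂ}

@[simp] lemma walkGain_nil {u : V} : walkGain φ (Walk.nil : G.Walk u u) = 1 := rfl

@[simp] lemma walkGain_cons {u v w : V} (h : G.Adj u v) (p : G.Walk v w) :
    walkGain φ (Walk.cons h p) = φ u v * walkGain φ p := by
  simp [walkGain]

lemma walkGain_append {u v w : V} (p : G.Walk u v) (q : G.Walk v w) :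
    walkGain φ (p.append q) = walkGain φ p * walkGain φ q := by
  simp [walkGain, Walk.darts_append]

lemma gain_edge_ne_zero (hφ : IsGain G φ) {u v : V} (h : G.Adj u v) : φ u v ≠ 0 := by
  intro h0
  have := hφ.1 _ _ h
  rw [h0] at this
  simp at this

lemma walkGain_ne_zero (hφ : IsGain G φ) {u v : V} (p : G.Walk u v) :
    walkGain φ p ≠ 0 := by
  induction p with
  | nil => simp
  | cons h p ih => simp [walkGain_cons, gain_edge_ne_zero hφ h, ih]

lemma walkGain_reverse (hφ : IsGain G φ) {u v : V} (p : G.Walk u v) :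
    walkGain φ p.reverse = (walkGain φ p)⁻¹ := by
  induction p with
  | nil => simp
  | cons h p ih =>
    rw [Walk.reverse_cons, walkGain_append, ih, walkGain_cons, walkGain_cons, walkGain_nil,
      mul_one, hφ.2 _ _ h, mul_inv]
    ring

/-- helper: a walk `p : Walk a c` with nodup support containing the edge `s(c,a)`
has length 1. -/
lemma length_eq_one_of_edge_mem {a c : V} (p : G.Walk a c) (hnd : p.support.Nodup)
    (he : s(c, a) ∈ p.edges) : p.length = 1 := by
  induction p with
  | nil => simp at he
  | @cons a b c h' q ih =>
    rw [Walk.edges_cons, List.mem_cons] at he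
    rcases he with he | he
    · have hz : b = c := by
        rw [Sym2.eq_iff] at he
        rcases he with ⟨h1, h2⟩ | ⟨h1, h2⟩
        · exact h2 ▸ h1 ▸ rfl
        · exact h1.symm
      subst hz
      have hq : q.support.Nodup := by
        rw [Walk.support_cons] at hnd
        exact hnd.of_cons
      have : q = Walk.nil := by
        have hqe : (⟨q, Walk.IsPath.mk' hq⟩ : G.Path b b) = SimpleGraph.Path.nil :=
          SimpleGraph.Path.loop_eq _
        simpa using congrArg Subtype.val hqe
      subst this
      simp
    · exfalso
      have hv : a ∈ q.support := Walk.snd_mem_support_of_mem_edges q he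
      rw [Walk.support_cons] at hnd
      exact hnd.notMem hv

lemma closed_walkGain_eq_one [DecidableEq V] (hφ : IsGain G φ) (hb : GBalanced G φ) :
    ∀ (n : ℕ) (u : V) (c : G.Walk u u), c.length ≤ n → walkGain φ c = 1 := by
  intro n
  induction n with
  | zero =>
    intro u c hc
    cases c with
    | nil => simp
    | cons h p => simp at hc
  | succ n ih =>
    intro u c hc
    by_cases hnd : c.support.tail.Nodup
    · -- no repeated inner vertices
      cases c with
      | nil => simp
      | @cons _ v _ h p =>
        have hp : p.support.Nodup := by
          rw [Walk.support_cons] at hnd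
          simpa using hnd
        by_cases he : s(u, v) ∈ p.edges
        · -- length 2 closed walk
          have hl : p.length = 1 := length_eq_one_of_edge_mem p hp he
          cases p with
          | nil => simp at hl
          | @cons _ z _ h2 q =>
            cases q with
            | nil =>
              rw [walkGain_cons, walkGain_cons, walkGain_nil, mul_one, hφ.2 _ _ h]
              exact mul_inv_cancel₀ (gain_edge_ne_zero hφ h)
            | cons h3 q2 => simp [Walk.length_cons] at hl
        · have hcyc : (Walk.cons h p).IsCycle :=
            (Walk.cons_isCycle_iff p h).2 ⟨Walk.IsPath.mk' hp, he⟩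
          exact hb u _ hcyc
    · -- repeated inner vertex: split
      obtain ⟨w, hwdup⟩ := List.exists_duplicate_iff_not_nodup.2 hnd
      have hwcount : 2 ≤ c.support.tail.count w := List.duplicate_iff_two_le_count.1 hwdup
      have hw1 : w ∈ c.support := by
        rw [Walk.support_eq_cons]
        exact List.mem_cons_of_mem _ (List.count_pos_iff.1 (by omega))
      set p₁ := c.takeUntil w hw1 with hp₁
      set q := c.dropUntil w hw1 with hq
      have hspec : p₁.append q = c := (c.take_spec hw1)
      have hsup : c.support = p₁.support ++ q.support.tail := by
        rw [← hspec, Walk.support_append]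
      have hcount1 : p₁.support.count w = 1 := c.count_support_takeUntil_eq_one hw1
      have hcnt : p₁.support.count w + q.support.tail.count w
          = c.support.tail.count w + (if w = u then 1 else 0) := by
        rw [← List.count_append, ← hsup]
        conv_lhs => rw [Walk.support_eq_cons]
        simp only [List.count_cons]
        rcases eq_or_ne u w with h | h
        · simp [h]
        · simp [h, Ne.symm h]
      have hqtail : 1 ≤ q.support.tail.count w := by
        by_cases hwu : w = u
        · rw [if_pos hwu] at hcnt; omega
        · rw [if_neg hwu] at hcnt; omega
      cases hqc : q with
      | nil =>
        rw [hqc] at hqtail; simp at hqtail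
      | @cons _ z _ h2 q2 =>
        have hq2sup : q.support.tail = q2.support := by rw [hqc, Walk.support_cons]; rfl
        have hwq2 : w ∈ q2.support := by
          rw [hq2sup] at hqtail
          exact List.count_pos_iff.1 (by omega)
        set d' := q2.takeUntil w hwq2 with hd'
        set r := q2.dropUntil w hwq2 with hr
        have hspec2 : d'.append r = q2 := q2.take_spec hwq2
        have hgain : walkGain φ c
            = (φ w z * walkGain φ d') * (walkGain φ p₁ * walkGain φ r) := by
          rw [← hspec, walkGain_append, hqc, walkGain_cons, ← hspec2, walkGain_append]
          ring
        have hlen : c.length = p₁.length + (1 + (d'.length + r.length)) := by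
          rw [← hspec, Walk.length_append, hqc, Walk.length_cons, ← hspec2, Walk.length_append]
          ring
        have hpos : 1 ≤ p₁.length + r.length := by
          by_contra hcon
          push_neg at hcon
          have hp0 : p₁.length = 0 := by omega
          have hr0 : r.length = 0 := by omega
          have huw : u = w := Walk.eq_of_length_eq_zero hp0
          have hq2count : 2 ≤ q2.support.count w := by
            rw [← hq2sup]
            rw [if_pos huw.symm] at hcnt
            omega
          have hd'count : d'.support.count w = 1 := q2.count_support_takeUntil_eq_one hwq2
          have hsplit : q2.support.count w = d'.support.count w + r.support.tail.count w := by
            rw [← hspec2, Walk.support_append, List.count_append]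
          have hrt : 1 ≤ r.support.tail.count w := by omega
          cases hrc : r with
          | nil => rw [hrc] at hrt; simp at hrt
          | cons h3 r2 => rw [hrc] at hr0; simp [Walk.length_cons] at hr0
        have h1 : walkGain φ (Walk.cons h2 d') = 1 :=
          ih w (Walk.cons h2 d') (by rw [Walk.length_cons]; omega)
        have h2' : walkGain φ (p₁.append r) = 1 :=
          ih u (p₁.append r) (by rw [Walk.length_append]; omega)
        rw [walkGain_cons] at h1
        rw [walkGain_append] at h2'
        rw [hgain, h1, h2', mul_one]

end WalkLemmas
section Spectral
open Complex
variable [Fintype V] [DecidableEq V] [Nonempty V] {A : Matrix V V ℂ}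
set_option linter.unusedSectionVars false

lemma spec_real_eq (hA : A.IsHermitian) :
    {r : ℝ | (r : ℂ) ∈ spectrum ℂ A} = Set.range hA.eigenvalues := by
  rw [← hA.spectrum_real_eq_range_eigenvalues]
  ext r
  simp only [Set.mem_setOf_eq]
  have := spectrum.algebraMap_mem_iff (R := ℝ) (S := ℂ) (A := Matrix V V ℂ) (a := A) (r := r)
  rwa [Complex.coe_algebraMap] at this

lemma maxEig_mem (hA : A.IsHermitian) : ∃ k, hA.eigenvalues k = maxEig A := by
  have : maxEig A ∈ Set.range hA.eigenvalues := by
    rw [maxEig, spec_real_eq hA]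
    exact Set.Nonempty.csSup_mem (Set.range_nonempty _) (Set.finite_range _)
  obtain ⟨k, hk⟩ := this
  exact ⟨k, hk⟩

lemma eig_le_maxEig (hA : A.IsHermitian) (k : V) : hA.eigenvalues k ≤ maxEig A := by
  rw [maxEig, spec_real_eq hA]
  exact le_csSup (Set.finite_range _).bddAbove ⟨k, rfl⟩

lemma exists_maxEig_vec (hA : A.IsHermitian) :
    ∃ x : V → ℂ, x ≠ 0 ∧ A *ᵥ x = (maxEig A : ℂ) • x := by
  obtain ⟨k, hk⟩ := maxEig_mem hA
  refine ⟨⇑(hA.eigenvectorBasis k), ?_, ?_⟩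
  · intro h0
    exact hA.eigenvectorBasis.orthonormal.ne_zero k (by ext i; exact congrFun h0 i)
  · rw [hA.mulVec_eigenvectorBasis, ← hk]
    ext i
    simp [Complex.real_smul]

lemma star_mulVec_dot (hA : A.IsHermitian) (y z : V → ℂ) :
    star y ⬝ᵥ ((hA.eigenvectorUnitary : Matrix V V ℂ) *ᵥ z)
      = star (star (hA.eigenvectorUnitary : Matrix V V ℂ) *ᵥ y) ⬝ᵥ z := by
  rw [Matrix.star_mulVec, Matrix.dotProduct_mulVec]
  congr 1
  rw [Matrix.star_eq_conjTranspose, Matrix.conjTranspose_conjTranspose]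

lemma mulVec_spectral (hA : A.IsHermitian) (y : V → ℂ) :
    A *ᵥ y = (hA.eigenvectorUnitary : Matrix V V ℂ) *ᵥ
      (Matrix.diagonal (RCLike.ofReal ∘ hA.eigenvalues) *ᵥ
        (star (hA.eigenvectorUnitary : Matrix V V ℂ) *ᵥ y)) := by
  conv_lhs => rw [hA.spectral_theorem]
  rw [Matrix.mulVec_mulVec, Matrix.mulVec_mulVec]
  rfl

lemma mulVec_star_self (hA : A.IsHermitian) (y : V → ℂ) :
    (hA.eigenvectorUnitary : Matrix V V ℂ) *ᵥ
      (star (hA.eigenvectorUnitary : Matrix V V ℂ) *ᵥ y) = y := by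
  rw [Matrix.mulVec_mulVec, Matrix.mem_unitaryGroup_iff.mp hA.eigenvectorUnitary.2,
    Matrix.one_mulVec]

lemma quad_repr (hA : A.IsHermitian) (y : V → ℂ) :
    star y ⬝ᵥ (A *ᵥ y) = ((∑ k, hA.eigenvalues k *
      Complex.normSq ((star (hA.eigenvectorUnitary : Matrix V V ℂ) *ᵥ y) k) : ℝ) : ℂ) := by
  rw [mulVec_spectral hA y, star_mulVec_dot hA]
  set c := star (hA.eigenvectorUnitary : Matrix V V ℂ) *ᵥ y with hc
  rw [dotProduct]
  push_cast
  refine Finset.sum_congr rfl fun k _ => ?_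
  rw [Matrix.mulVec_diagonal, Pi.star_apply]
  have : (starRingEnd ℂ) (c k) * c k = (Complex.normSq (c k) : ℂ) := by
    rw [mul_comm, Complex.mul_conj]
  calc star (c k) * ((RCLike.ofReal ∘ hA.eigenvalues) k * c k)
      = (hA.eigenvalues k : ℂ) * ((starRingEnd ℂ) (c k) * c k) := by
        rw [Function.comp_apply, show (RCLike.ofReal (hA.eigenvalues k) : ℂ)
          = ((hA.eigenvalues k : ℝ) : ℂ) from rfl, Complex.star_def]; ring
    _ = (hA.eigenvalues k : ℂ) * (Complex.normSq (c k) : ℂ) := by rw [this]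

lemma norm_repr (hA : A.IsHermitian) (y : V → ℂ) :
    ∑ i, Complex.normSq (y i)
      = ∑ k, Complex.normSq ((star (hA.eigenvectorUnitary : Matrix V V ℂ) *ᵥ y) k) := by
  have key : ∀ z : V → ℂ, star z ⬝ᵥ z = ((∑ i, Complex.normSq (z i) : ℝ) : ℂ) := by
    intro z
    rw [dotProduct]
    push_cast
    refine Finset.sum_congr rfl fun k _ => ?_
    rw [Pi.star_apply, mul_comm]
    exact Complex.mul_conj (z k)
  set c := star (hA.eigenvectorUnitary : Matrix V V ℂ) *ᵥ y with hc
  have h1 : star y ⬝ᵥ y = star c ⬝ᵥ c := by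
    rw [← star_mulVec_dot hA y c, mulVec_star_self hA y]
  rw [key, key] at h1
  exact_mod_cast h1


lemma star_dot_self (z : V → ℂ) : star z ⬝ᵥ z = ((∑ i, Complex.normSq (z i) : ℝ) : ℂ) := by
  rw [dotProduct]
  push_cast
  refine Finset.sum_congr rfl fun k _ => ?_
  rw [Pi.star_apply, mul_comm]
  exact Complex.mul_conj (z k)

lemma quad_le (hA : A.IsHermitian) (y : V → ℂ) :
    (star y ⬝ᵥ (A *ᵥ y)).re ≤ maxEig A * ∑ i, Complex.normSq (y i) := by
  rw [quad_repr hA y, Complex.ofReal_re, norm_repr hA y, Finset.mul_sum]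
  exact Finset.sum_le_sum fun k _ =>
    mul_le_mul_of_nonneg_right (eig_le_maxEig hA k) (Complex.normSq_nonneg _)

lemma eigvec_of_quad_ge (hA : A.IsHermitian) (y : V → ℂ)
    (hge : maxEig A * ∑ i, Complex.normSq (y i) ≤ (star y ⬝ᵥ (A *ᵥ y)).re) :
    A *ᵥ y = (maxEig A : ℂ) • y := by
  set c := star (hA.eigenvectorUnitary : Matrix V V ℂ) *ᵥ y with hc
  have hrepr : (star y ⬝ᵥ (A *ᵥ y)).re = ∑ k, hA.eigenvalues k * Complex.normSq (c k) := by
    rw [quad_repr hA y, Complex.ofReal_re]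
  rw [hrepr, norm_repr hA y, Finset.mul_sum] at hge
  have hterm : ∀ k ∈ Finset.univ, (maxEig A - hA.eigenvalues k) * Complex.normSq (c k) = 0 := by
    have hnn : ∀ k ∈ Finset.univ, 0 ≤ (maxEig A - hA.eigenvalues k) * Complex.normSq (c k) :=
      fun k _ => mul_nonneg (by linarith [eig_le_maxEig hA k]) (Complex.normSq_nonneg _)
    have hsum : ∑ k, (maxEig A - hA.eigenvalues k) * Complex.normSq (c k) = 0 := by
      have : ∑ k, (maxEig A - hA.eigenvalues k) * Complex.normSq (c k)
          = ∑ k, maxEig A * Complex.normSq (c k) - ∑ k, hA.eigenvalues k * Complex.normSq (c k) := by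
        rw [← Finset.sum_sub_distrib]
        exact Finset.sum_congr rfl fun k _ => by ring
      have hle : ∑ k, (maxEig A - hA.eigenvalues k) * Complex.normSq (c k) ≤ 0 := by
        rw [this]; linarith
      exact le_antisymm hle (Finset.sum_nonneg hnn)
    exact (Finset.sum_eq_zero_iff_of_nonneg hnn).1 hsum
  have hdiag : Matrix.diagonal (RCLike.ofReal ∘ hA.eigenvalues) *ᵥ c = (maxEig A : ℂ) • c := by
    ext k
    rw [Matrix.mulVec_diagonal, Pi.smul_apply]
    by_cases h0 : c k = 0
    · simp [h0]
    · have : maxEig A - hA.eigenvalues k = 0 := by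
        have := hterm k (Finset.mem_univ k)
        have hnsq : Complex.normSq (c k) ≠ 0 := fun hh => h0 (Complex.normSq_eq_zero.1 hh)
        exact (mul_eq_zero.1 this).resolve_right hnsq
      have heq : hA.eigenvalues k = maxEig A := by linarith
      simp [Function.comp, heq, RCLike.ofReal_alg, smul_eq_mul]
  rw [mulVec_spectral hA y, hdiag, Matrix.mulVec_smul, mulVec_star_self hA y]

end Spectral
section Main
open Complex SimpleGraph Walk
variable [Fintype V] [DecidableEq V]
set_option linter.unusedSectionVars false

lemma walkGain_of_potential {G : SimpleGraph V} {φ : V → V → ℂ} {ψ : V → ℂ}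
    (hψ : ∀ v, ψ v ≠ 0) (hE : ∀ i j, G.Adj i j → φ i j = ψ i * (ψ j)⁻¹) {a b : V}
    (p : G.Walk a b) : walkGain φ p = ψ a * (ψ b)⁻¹ := by
  induction p with
  | nil => rw [walkGain_nil, mul_inv_cancel₀ (hψ _)]
  | @cons a c b h p ih =>
    rw [walkGain_cons, ih, hE _ _ h, mul_assoc, ← mul_assoc ((ψ c)⁻¹),
      inv_mul_cancel₀ (hψ c), one_mul]

lemma gainAdj_isHermitian {G : SimpleGraph V} {φ : V → V → ℂ} (hφ : IsGain G φ) :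
    (gainAdj G φ).IsHermitian := by
  ext i j
  simp only [Matrix.conjTranspose_apply, gainAdj]
  by_cases h : G.Adj i j
  · rw [if_pos h.symm, if_pos h, hφ.2 i j h, Complex.inv_eq_conj (hφ.1 i j h)]
    exact Complex.conj_conj _
  · rw [if_neg (fun hh => h hh.symm), if_neg h, star_zero]

lemma adjMatrix_isHermitian (G : SimpleGraph V) : (G.adjMatrix ℂ).IsHermitian := by
  ext i j
  simp only [Matrix.conjTranspose_apply, SimpleGraph.adjMatrix_apply]
  by_cases h : G.Adj i j
  · rw [if_pos h.symm, if_pos h, star_one]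
  · rw [if_neg (fun hh => h hh.symm), if_neg h, star_zero]

lemma balanced_imp_eq {G : SimpleGraph V} (hconn : G.Connected) {φ : V → V → ℂ}
    (hφ : IsGain G φ) (hb : GBalanced G φ) :
    maxEig (gainAdj G φ) = maxEig (G.adjMatrix ℂ) := by
  have hNE : Nonempty V := hconn.nonempty
  obtain ⟨r0⟩ := hNE
  have hwalk : ∀ v, Nonempty (G.Walk r0 v) := fun v => (hconn.preconnected r0 v)
  set θ : V → ℂ := fun v => walkGain φ (hwalk v).some with hθ
  have hθval : ∀ (v : V) (p : G.Walk r0 v), walkGain φ p = θ v := by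
    intro v p
    have h1 : walkGain φ (p.append (hwalk v).some.reverse) = 1 :=
      closed_walkGain_eq_one hφ hb _ r0 _ le_rfl
    rw [walkGain_append, walkGain_reverse hφ, ← div_eq_mul_inv] at h1
    exact (div_eq_one_iff_eq (walkGain_ne_zero hφ _)).1 h1
  have hθne : ∀ v, θ v ≠ 0 := fun v => walkGain_ne_zero hφ _
  have hedge : ∀ i j, G.Adj i j → φ i j = (θ i)⁻¹ * θ j := by
    intro i j h
    have h1 : walkGain φ ((hwalk i).some.append (Walk.cons h Walk.nil)) = θ j := hθval j _
    rw [walkGain_append, walkGain_cons, walkGain_nil, mul_one, hθval i (hwalk i).some] at h1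
    have h2 : (θ i)⁻¹ * (θ i * φ i j) = (θ i)⁻¹ * θ j := by rw [h1]
    rwa [← mul_assoc, inv_mul_cancel₀ (hθne i), one_mul] at h2
  have hmat : gainAdj G φ
      = Matrix.diagonal (fun v => (θ v)⁻¹) * (G.adjMatrix ℂ) * Matrix.diagonal θ := by
    ext i j
    rw [Matrix.mul_diagonal, Matrix.diagonal_mul]
    by_cases h : G.Adj i j
    · simp only [gainAdj, SimpleGraph.adjMatrix_apply, if_pos h, hedge i j h]
      ring
    · simp only [gainAdj, SimpleGraph.adjMatrix_apply, if_neg h]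
      ring
  have hdi : Matrix.diagonal (fun v => (θ v)⁻¹) * Matrix.diagonal θ = 1 := by
    ext i j
    rw [Matrix.diagonal_mul_diagonal]
    by_cases hij : i = j
    · subst hij; rw [Matrix.diagonal_apply_eq, inv_mul_cancel₀ (hθne i), Matrix.one_apply_eq]
    · rw [Matrix.diagonal_apply_ne _ hij, Matrix.one_apply_ne hij]
  have hdi2 : Matrix.diagonal θ * Matrix.diagonal (fun v => (θ v)⁻¹) = 1 := by
    ext i j
    rw [Matrix.diagonal_mul_diagonal]
    by_cases hij : i = j
    · subst hij; rw [Matrix.diagonal_apply_eq, mul_inv_cancel₀ (hθne i), Matrix.one_apply_eq]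
    · rw [Matrix.diagonal_apply_ne _ hij, Matrix.one_apply_ne hij]
  set u : (Matrix V V ℂ)ˣ := ⟨Matrix.diagonal (fun v => (θ v)⁻¹), Matrix.diagonal θ, hdi, hdi2⟩
    with hu
  have hconj : gainAdj G φ = (u : Matrix V V ℂ) * (G.adjMatrix ℂ) * ((u⁻¹ : (Matrix V V ℂ)ˣ) : Matrix V V ℂ) := hmat
  have hspec : spectrum ℂ (gainAdj G φ) = spectrum ℂ (G.adjMatrix ℂ) := by
    rw [hconj, spectrum.units_conjugate]
  unfold maxEig
  rw [hspec]
lemma eq_imp_balanced {G : SimpleGraph V} (hconn : G.Connected) {φ : V → V → ℂ}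
    (hφ : IsGain G φ) (heq : maxEig (gainAdj G φ) = maxEig (G.adjMatrix ℂ)) :
    GBalanced G φ := by
  haveI hNE : Nonempty V := hconn.nonempty
  have hΦ := gainAdj_isHermitian hφ
  have hG := adjMatrix_isHermitian (V := V) G
  obtain ⟨x, hx0, hxe⟩ := exists_maxEig_vec hΦ
  set lam := maxEig (gainAdj G φ) with hlam
  set y : V → ℂ := fun i => ((‖x i‖ : ℝ) : ℂ) with hy
  set B : V → V → ℝ := fun i j => if G.Adj i j then ‖x i‖ * ‖x j‖ else 0
    with hB
  have hq1 : (star x ⬝ᵥ (gainAdj G φ *ᵥ x)).re = lam * ∑ i, Complex.normSq (x i) := by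
    rw [hxe, dotProduct_smul, star_dot_self, smul_eq_mul, ← Complex.ofReal_mul,
      Complex.ofReal_re]
  have hexp : (star x ⬝ᵥ (gainAdj G φ *ᵥ x)).re
      = ∑ i, ∑ j, (star (x i) * (gainAdj G φ i j * x j)).re := by
    rw [dotProduct, Complex.re_sum]
    refine Finset.sum_congr rfl fun i _ => ?_
    rw [show (star x) i = star (x i) from rfl,
      show (gainAdj G φ *ᵥ x) i = ∑ j, gainAdj G φ i j * x j from rfl,
      Finset.mul_sum, Complex.re_sum]
  have hbound : ∀ i j, (star (x i) * (gainAdj G φ i j * x j)).re ≤ B i j := by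
    intro i j
    by_cases h : G.Adj i j
    · have h1 : ‖star (x i) * (gainAdj G φ i j * x j)‖
          = ‖x i‖ * ‖x j‖ := by
        simp only [gainAdj, if_pos h, Complex.star_def, norm_mul,
          Complex.norm_conj]
        rw [hφ.1 i j h]; ring
      calc (star (x i) * (gainAdj G φ i j * x j)).re
          ≤ ‖star (x i) * (gainAdj G φ i j * x j)‖ := Complex.re_le_norm _
        _ = ‖x i‖ * ‖x j‖ := h1
        _ = B i j := by rw [hB]; simp [if_pos h]
    · simp [hB, gainAdj, h]
  have hyq : (star y ⬝ᵥ ((G.adjMatrix ℂ) *ᵥ y)).re = ∑ i, ∑ j, B i j := by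
    rw [dotProduct, Complex.re_sum]
    refine Finset.sum_congr rfl fun i _ => ?_
    rw [show (star y) i = star (y i) from rfl,
      show ((G.adjMatrix ℂ) *ᵥ y) i = ∑ j, (G.adjMatrix ℂ) i j * y j from rfl,
      Finset.mul_sum, Complex.re_sum]
    refine Finset.sum_congr rfl fun j _ => ?_
    by_cases h : G.Adj i j
    · simp [hy, hB, h, Complex.conj_ofReal, ← Complex.ofReal_mul]
    · simp [hy, hB, h]
  have hnsq : ∑ i, Complex.normSq (y i) = ∑ i, Complex.normSq (x i) := by
    refine Finset.sum_congr rfl fun i _ => ?_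
    rw [hy, Complex.normSq_ofReal, Complex.normSq_eq_norm_sq, sq]
  have hup : (star y ⬝ᵥ ((G.adjMatrix ℂ) *ᵥ y)).re ≤ lam * ∑ i, Complex.normSq (x i) := by
    have h := quad_le hG y
    rw [hnsq, ← heq] at h
    exact h
  have hdown : lam * ∑ i, Complex.normSq (x i) ≤ ∑ i, ∑ j, B i j := by
    rw [← hq1, hexp]
    exact Finset.sum_le_sum fun i _ => Finset.sum_le_sum fun j _ => hbound i j
  have hBtot : ∑ i, ∑ j, B i j = lam * ∑ i, Complex.normSq (x i) :=
    le_antisymm (hyq ▸ hup) hdown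
  have heig : (G.adjMatrix ℂ) *ᵥ y = ((lam : ℝ) : ℂ) • y := by
    have hge : maxEig (G.adjMatrix ℂ) * ∑ i, Complex.normSq (y i)
        ≤ (star y ⬝ᵥ ((G.adjMatrix ℂ) *ᵥ y)).re := by
      rw [hnsq, ← heq, hyq]
      exact hdown
    have h7 := eigvec_of_quad_ge hG y hge
    rw [← heq] at h7
    exact h7
  have hterm : ∀ i j, (star (x i) * (gainAdj G φ i j * x j)).re = B i j := by
    have hsum0 : ∑ i, ∑ j, (B i j - (star (x i) * (gainAdj G φ i j * x j)).re) = 0 := by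
      simp only [Finset.sum_sub_distrib]
      rw [← hexp, hq1, hBtot]
      ring
    intro i j
    have houter := (Finset.sum_eq_zero_iff_of_nonneg
      (fun i (_ : i ∈ Finset.univ) => Finset.sum_nonneg
        (fun j (_ : j ∈ Finset.univ) => sub_nonneg.2 (hbound i j)))).1 hsum0 i (Finset.mem_univ i)
    have hinner := (Finset.sum_eq_zero_iff_of_nonneg
      (fun j (_ : j ∈ Finset.univ) => sub_nonneg.2 (hbound i j))).1 houter j (Finset.mem_univ j)
    linarith
  have hprop : ∀ i, x i = 0 → ∀ j, G.Adj i j → x j = 0 := by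
    intro i h0 j hij
    have h1 := congrFun heig i
    rw [SimpleGraph.adjMatrix_mulVec_apply] at h1
    have h2 : (∑ k ∈ G.neighborFinset i, y k) = 0 := by
      rw [h1, Pi.smul_apply, hy]
      simp [h0]
    have h3 : ∑ k ∈ G.neighborFinset i, ‖x k‖ = 0 := by
      have h4 := congrArg Complex.re h2
      rw [Complex.re_sum] at h4
      simpa [hy] using h4
    have h5 := (Finset.sum_eq_zero_iff_of_nonneg
      (fun k _ => norm_nonneg (x k))).1 h3 j ((SimpleGraph.mem_neighborFinset G i j).2 hij)
    exact norm_eq_zero.1 h5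
  have hnz : ∀ v, x v ≠ 0 := by
    obtain ⟨i0, hi0⟩ : ∃ i, x i ≠ 0 := by
      by_contra hcon
      push_neg at hcon
      exact hx0 (funext hcon)
    intro v hv
    have hwprop : ∀ (a b : V) (p : G.Walk a b), x a = 0 → x b = 0 := by
      intro a b p
      induction p with
      | nil => exact id
      | cons h p ih => intro h0; exact ih (hprop _ h0 _ h)
    exact hi0 (hwprop v i0 (hconn.preconnected v i0).some hv)
  have habsne : ∀ v, ((‖x v‖ : ℝ) : ℂ) ≠ 0 :=
    fun v => Complex.ofReal_ne_zero.2 (norm_ne_zero_iff.2 (hnz v))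
  set ψ : V → ℂ := fun v => x v / ((‖x v‖ : ℝ) : ℂ) with hψdef
  have hψne : ∀ v, ψ v ≠ 0 := fun v => div_ne_zero (hnz v) (habsne v)
  have hsq : ∀ v, star (x v) * x v
      = ((‖x v‖ : ℝ) : ℂ) * ((‖x v‖ : ℝ) : ℂ) := by
    intro v
    rw [Complex.star_def, mul_comm, Complex.mul_conj, Complex.normSq_eq_norm_sq]
    push_cast
    ring
  have hedge : ∀ i j, G.Adj i j → φ i j = ψ i * (ψ j)⁻¹ := by
    intro i j hij
    have hre : (star (x i) * (gainAdj G φ i j * x j)).re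
        = ‖x i‖ * ‖x j‖ := by
      have := hterm i j
      rw [hB] at this
      simpa [if_pos hij] using this
    have habs : ‖star (x i) * (gainAdj G φ i j * x j)‖
        = ‖x i‖ * ‖x j‖ := by
      simp only [gainAdj, if_pos hij, Complex.star_def, norm_mul,
        Complex.norm_conj]
      rw [hφ.1 i j hij]; ring
    have him : (star (x i) * (gainAdj G φ i j * x j)).im = 0 := by
      have h5 := Complex.sq_norm (star (x i) * (gainAdj G φ i j * x j))
      rw [Complex.normSq_apply, habs, hre] at h5
      have h6 : (star (x i) * (gainAdj G φ i j * x j)).im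
          * (star (x i) * (gainAdj G φ i j * x j)).im = 0 := by nlinarith [h5]
      exact mul_self_eq_zero.1 h6
    have hzeq : star (x i) * (φ i j * x j)
        = ((‖x i‖ : ℝ) : ℂ) * ((‖x j‖ : ℝ) : ℂ) := by
      have : star (x i) * (gainAdj G φ i j * x j)
          = ((‖x i‖ * ‖x j‖ : ℝ) : ℂ) := by
        apply Complex.ext
        · rw [hre, Complex.ofReal_re]
        · rw [him, Complex.ofReal_im]
      rw [gainAdj, if_pos hij] at this
      rw [this]
      push_cast
      ring
    have hne1 : star (x i) * x j ≠ 0 := mul_ne_zero (star_ne_zero.2 (hnz i)) (hnz j)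
    apply mul_left_cancel₀ hne1
    have hgoal2 : star (x i) * x j * (ψ i * (ψ j)⁻¹)
        = ((‖x i‖ : ℝ) : ℂ) * ((‖x j‖ : ℝ) : ℂ) := by
      have e1 : ψ i = x i / ((‖x i‖ : ℝ) : ℂ) := rfl
      have e2 : ψ j = x j / ((‖x j‖ : ℝ) : ℂ) := rfl
      rw [e1, e2, inv_div, div_mul_div_comm, ← mul_div_assoc,
        div_eq_iff (mul_ne_zero (habsne i) (hnz j))]
      linear_combination (x j * ((‖x j‖ : ℝ) : ℂ)) * hsq i
    rw [hgoal2, ← hzeq]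
    ring
  intro u c hc
  rw [walkGain_of_potential hψne hedge c, mul_inv_cancel₀ (hψne u)]
end Main

/-- for a connected gain graph, the largest eigenvalues of `A(Φ)` and `A(G)`
coincide iff `Φ` is balanced. -/
theorem maxEig_iff_balanced {V : Type*} [Fintype V] [DecidableEq V]
    (G : SimpleGraph V) (hconn : G.Connected) (φ : V → V → ℂ) (hφ : IsGain G φ) :
    maxEig (gainAdj G φ) = maxEig (G.adjMatrix ℂ) ↔ GBalanced G φ := by
  exact ⟨fun h => eq_imp_balanced hconn hφ h, fun h => balanced_imp_eq hconn hφ h⟩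

end GG
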